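/- Let I : ℝ → ℝ be a function and let y : ℝ → ℝ be differentiable with y(t) ∈ (−1, 1) for all t. Then y satisfies y'(t) = (1 − I(t))·(2|y(t)| − y(t)²) + I(t) for all t if and only if the function x(t) = y(t)/(1 − |y(t)|) is differentiable and satisfies the symmetrized linear-quadratic integrate-and-fire equation x'(t) = 2|x(t)| + x(t)² + I(t) for all t. -/

import Mathlib

lemma phi_hasDerivAt (u : ℝ) (hu : |u| < 1) :
    HasDerivAt (fun v : ℝ => v / (1 - |v|)) (((1 - |u|) ^ 2)⁻¹) u := by
  rcases lt_trichotomy u 0 with h | h | h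
  · have hne : 1 + u ≠ 0 := by
      have := neg_lt_of_abs_lt hu; linarith
    have hd : HasDerivAt (fun v : ℝ => v / (1 + v))
        ((1 * (1 + u) - u * (0 + 1)) / (1 + u) ^ 2) u :=
      (hasDerivAt_id u).div ((hasDerivAt_const u 1).add (hasDerivAt_id u)) hne
    have heq : (fun v : ℝ => v / (1 - |v|)) =ᶠ[nhds u] fun v => v / (1 + v) := by
      filter_upwards [Iio_mem_nhds h] with v hv
      rw [abs_of_neg hv]; ring_nf
    have := hd.congr_of_eventuallyEq heq
    refine this.congr_deriv ?_
    rw [abs_of_neg h, sub_neg_eq_add]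
    field_simp
    ring
  · subst h
    have h1 : HasDerivAt (fun v : ℝ => v / (1 - |v|)) 1 0 := by
      rw [hasDerivAt_iff_tendsto_slope]
      have hc : Filter.Tendsto (fun v : ℝ => (1 - |v|)⁻¹)
          (nhdsWithin 0 {(0:ℝ)}ᶜ) (nhds 1) := by
        have hca : ContinuousAt (fun v : ℝ => (1 - |v|)⁻¹) 0 := by
          apply ContinuousAt.inv₀
          · exact (continuous_const.sub continuous_abs).continuousAt
          · simp
        have := hca.continuousWithinAt (s := {(0:ℝ)}ᶜ)
        unfold ContinuousWithinAt at this
        simpa using this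
      apply hc.congr'
      filter_upwards [self_mem_nhdsWithin] with v hv
      have hv0 : (v:ℝ) ≠ 0 := hv
      simp only [slope, vsub_eq_sub, sub_zero, smul_eq_mul]
      field_simp
      simp
    simpa using h1
  · have hne : 1 - u ≠ 0 := by
      have := lt_of_abs_lt hu; linarith
    have hd : HasDerivAt (fun v : ℝ => v / (1 - v))
        ((1 * (1 - u) - u * (0 - 1)) / (1 - u) ^ 2) u :=
      (hasDerivAt_id u).div ((hasDerivAt_const u 1).sub (hasDerivAt_id u)) hne
    have heq : (fun v : ℝ => v / (1 - |v|)) =ᶠ[nhds u] fun v => v / (1 - v) := by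
      filter_upwards [Ioi_mem_nhds h] with v hv
      rw [abs_of_pos hv]
    have := hd.congr_of_eventuallyEq heq
    refine this.congr_deriv ?_
    rw [abs_of_pos h]
    field_simp
    ring

theorem LQIF_phase_dual_to_symmetrized_LQIF
    (I : ℝ → ℝ) (y : ℝ → ℝ) (hy : Differentiable ℝ y)
    (hyJ : ∀ t, y t ∈ Set.Ioo (-1 : ℝ) 1) :
    (∀ t, deriv y t = (1 - I t) * (2 * |y t| - y t ^ 2) + I t) ↔
      (Differentiable ℝ (fun t => y t / (1 - |y t|)) ∧
        ∀ t, deriv (fun s => y s / (1 - |y s|)) t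
          = 2 * |y t / (1 - |y t|)| + (y t / (1 - |y t|)) ^ 2 + I t) := by
  have habs : ∀ t, |y t| < 1 := fun t => abs_lt.mpr ⟨(hyJ t).1, (hyJ t).2⟩
  have hpos : ∀ t, 0 < 1 - |y t| := fun t => by have := habs t; linarith
  have hx : ∀ t, HasDerivAt (fun s => y s / (1 - |y s|))
      (deriv y t * ((1 - |y t|) ^ 2)⁻¹) t := by
    intro t
    have := (phi_hasDerivAt (y t) (habs t)).comp t (hy t).hasDerivAt
    exact this.congr_deriv (mul_comm _ _)
  constructor
  · intro hode
    refine ⟨fun t => ((hx t).differentiableAt : _), fun t => ?_⟩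
    rw [(hx t).deriv, hode t, abs_div, abs_of_pos (hpos t), div_pow, ← sq_abs (y t)]
    set a := |y t| with ha
    have h1 : (1:ℝ) - a ≠ 0 := (hpos t).ne'
    field_simp
    ring
  · rintro ⟨-, hode⟩ t
    have h1 := (hx t).deriv
    rw [hode t, abs_div, abs_of_pos (hpos t), div_pow, ← sq_abs (y t)] at h1
    have hne : (1:ℝ) - |y t| ≠ 0 := (hpos t).ne'
    have hne2 : ((1:ℝ) - |y t|) ^ 2 ≠ 0 := pow_ne_zero _ hne
    rw [← sq_abs (y t)]
    set a := |y t| with ha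
    calc deriv y t = deriv y t * ((1 - a) ^ 2)⁻¹ * (1 - a) ^ 2 := by
          field_simp
      _ = (2 * (a / (1 - a)) + a ^ 2 / (1 - a) ^ 2 + I t)
            * (1 - a) ^ 2 := by rw [← h1]
      _ = (1 - I t) * (2 * a - a ^ 2) + I t := by
          field_simp
          ring
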